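/- Let z, w be in the upper half-plane H with z ≠ w, and let x ∈ ℝ. Then Re[(2/(z − x) − conj(2/(w − x)))/(z − conj(w))] − Re[(2/(z − x) − 2/(w − x))/(z − w)] = − Im(2/(z − x)) · Im(2/(w − x)). -/
import Mathlib


theorem green_derivative_identity_H (z w : ℂ) (hz : 0 < z.im) (hw : 0 < w.im)
    (hzw : z ≠ w) (x : ℝ) :
    ((2 / (z - (x : ℂ)) - (starRingEnd ℂ) (2 / (w - (x : ℂ)))) /
        (z - (starRingEnd ℂ) w)).re -
      ((2 / (z - (x : ℂ)) - 2 / (w - (x : ℂ))) / (z - w)).re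
    = -((2 / (z - (x : ℂ))).im * (2 / (w - (x : ℂ))).im) := by
  have hzx : z - (x : ℂ) ≠ 0 := by
    intro h
    have : (z - (x : ℂ)).im = 0 := by rw [h]; simp
    simp [Complex.sub_im] at this
    linarith
  have hwx : w - (x : ℂ) ≠ 0 := by
    intro h
    have : (w - (x : ℂ)).im = 0 := by rw [h]; simp
    simp [Complex.sub_im] at this
    linarith
  have hcwx : (starRingEnd ℂ) w - (x : ℂ) ≠ 0 := by
    intro h
    have : ((starRingEnd ℂ) w - (x : ℂ)).im = 0 := by rw [h]; simp
    simp [Complex.sub_im, Complex.conj_im] at this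
    linarith
  have hzcw : z - (starRingEnd ℂ) w ≠ 0 := by
    intro h
    have : (z - (starRingEnd ℂ) w).im = 0 := by rw [h]; simp
    simp [Complex.sub_im, Complex.conj_im] at this
    linarith
  have hzw' : z - w ≠ 0 := sub_ne_zero.mpr hzw
  have hconj : (starRingEnd ℂ) (2 / (w - (x : ℂ))) = 2 / ((starRingEnd ℂ) w - (x : ℂ)) := by
    rw [map_div₀, map_sub, Complex.conj_ofReal]
    simp [Complex.conj_ofNat]
  have h1 : (2 / (z - (x : ℂ)) - (starRingEnd ℂ) (2 / (w - (x : ℂ)))) /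
      (z - (starRingEnd ℂ) w)
      = -((2 / (z - (x : ℂ))) * ((starRingEnd ℂ) (2 / (w - (x : ℂ))))) / 2 := by
    rw [hconj]
    field_simp
    ring
  have h2 : (2 / (z - (x : ℂ)) - 2 / (w - (x : ℂ))) / (z - w)
      = -((2 / (z - (x : ℂ))) * (2 / (w - (x : ℂ)))) / 2 := by
    field_simp
    ring
  rw [h1, h2]
  set a := 2 / (z - (x : ℂ))
  set b := 2 / (w - (x : ℂ))
  simp [Complex.div_re, Complex.mul_re, Complex.mul_im, Complex.conj_re, Complex.conj_im,
    Complex.normSq]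
  ring
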